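/- Let k ≥ 1 be an integer and let A ∈ SL₂(ℂ). Then Σ_{i=1}^{k} (−1)^{k−i} tr(A^{i}) + (−1)^{k} = Π_{j=1}^{k} ( tr(A) + ζ^{j} + ζ^{−j} ), where ζ = e^{2πi/(2k+1)} is a primitive (2k+1)-th root of unity in ℂ. -/

import Mathlib

open Finset Polynomial

private lemma aux_prod_root (n : ℕ) (hn : 0 < n) {ζ : ℂ} (hζ : IsPrimitiveRoot ζ n) (μ : ℂ) :
    ∏ j ∈ range n, (μ - ζ ^ j) = μ ^ n - 1 := by
  have hroots : (X ^ n - C (1:ℂ)).roots = (Multiset.range n).map (fun j => ζ ^ j * 1) := by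
    rw [← nthRoots, hζ.nthRoots_eq (one_pow n)]
  have hmonic : (X ^ n - C (1:ℂ)).Monic := monic_X_pow_sub_C _ hn.ne'
  have hcard : (X ^ n - C (1:ℂ)).roots.card = (X ^ n - C (1:ℂ)).natDegree := by
    rw [hroots, Multiset.card_map, Multiset.card_range, natDegree_X_pow_sub_C]
  have := prod_multiset_X_sub_C_of_monic_of_roots_card_eq hmonic hcard
  have heval := congrArg (Polynomial.eval μ) this
  simp only [eval_multiset_prod, hroots, Multiset.map_map, Function.comp, mul_one,
    eval_sub, eval_pow, eval_X, eval_C] at heval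
  rw [← heval]
  simp [Finset.prod_eq_multiset_prod, Finset.range_val]

private lemma aux_prod_add (k : ℕ) {ζ : ℂ} (hζ : IsPrimitiveRoot ζ (2*k+1)) (μ : ℂ) :
    ∏ j ∈ range (2*k+1), (μ + ζ ^ j) = μ ^ (2*k+1) + 1 := by
  have h := aux_prod_root (2*k+1) (Nat.succ_pos _) hζ (-μ)
  have h2 : ∏ j ∈ range (2*k+1), (-μ - ζ ^ j)
      = (∏ j ∈ range (2*k+1), (-1 : ℂ)) * ∏ j ∈ range (2*k+1), (μ + ζ ^ j) := by
    rw [← Finset.prod_mul_distrib]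
    exact Finset.prod_congr rfl (fun j _ => by ring)
  rw [h2, Finset.prod_const, card_range, Odd.neg_pow ⟨k, by ring⟩, Odd.neg_pow ⟨k, by ring⟩] at h
  simp only [one_pow] at h
  linear_combination -h

private lemma aux_prod_Icc (k : ℕ) {ζ : ℂ} (hζ : IsPrimitiveRoot ζ (2*k+1)) (l : ℂ) :
    ∏ j ∈ Icc 1 (2*k), (l + ζ ^ j) = ∑ j ∈ range (2*k+1), (-l)^j := by
  have key : (X + C (1:ℂ)) * (∏ j ∈ Icc 1 (2*k), (X + C (ζ ^ j)))
      = (X + C (1:ℂ)) * (∑ j ∈ range (2*k+1), (-X)^j) := by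
    apply Polynomial.funext
    intro μ
    simp only [eval_mul, eval_add, eval_X, eval_C, eval_prod, eval_finset_sum, eval_pow, eval_neg]
    have hsplit : ∏ j ∈ range (2*k+1), (μ + ζ ^ j)
        = (∏ i ∈ range (2*k), (μ + ζ ^ (i+1))) * (μ + ζ ^ 0) := Finset.prod_range_succ' _ _
    have hre : ∏ i ∈ range (2*k), (μ + ζ ^ (i+1)) = ∏ j ∈ Icc 1 (2*k), (μ + ζ ^ j) := by
      apply Finset.prod_nbij' (fun i => i + 1) (fun j => j - 1)
      · intro a ha; simp at ha ⊢; omega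
      · intro a ha; simp at ha ⊢; omega
      · intro a _; omega
      · intro a ha; simp at ha; omega
      · intro a ha; rfl
    have hgeom := geom_sum_mul (-μ) (2*k+1)
    have hodd : (-μ) ^ (2*k+1) = -μ^(2*k+1) := Odd.neg_pow ⟨k, by ring⟩ μ
    have hall := aux_prod_add k hζ μ
    rw [hsplit, hre] at hall
    simp only [pow_zero] at hall
    rw [hodd] at hgeom
    linear_combination hall + hgeom
  have hne : (X + C (1:ℂ)) ≠ 0 := Polynomial.X_add_C_ne_zero 1
  have := mul_left_cancel₀ hne key
  have heval := congrArg (Polynomial.eval l) this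
  simpa only [eval_prod, eval_finset_sum, eval_add, eval_X, eval_C, eval_pow, eval_neg] using heval

private lemma aux_sq (M : Matrix (Fin 2) (Fin 2) ℂ) :
    M ^ 2 = (Matrix.trace M) • M - (M.det) • (1 : Matrix (Fin 2) (Fin 2) ℂ) := by
  ext i j
  fin_cases i <;> fin_cases j <;>
    simp [pow_two, Matrix.mul_apply, Matrix.trace_fin_two, Matrix.det_fin_two,
      Fin.sum_univ_two, Matrix.one_apply] <;> ring

private lemma aux_trace_pow (M : Matrix (Fin 2) (Fin 2) ℂ) (hdet : M.det = 1) (l : ℂ)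
    (hl : l * l - Matrix.trace M * l + 1 = 0) (hl0 : l ≠ 0) :
    ∀ i : ℕ, Matrix.trace (M ^ i) = l ^ i + (l⁻¹) ^ i := by
  set t := Matrix.trace M with ht
  have hsum : l + l⁻¹ = t := by field_simp; linear_combination hl
  have hrec : ∀ i : ℕ, M ^ (i + 2) = t • M ^ (i+1) - M ^ i := by
    intro i
    have : M ^ (i + 2) = M ^ i * M ^ 2 := by rw [pow_add]
    rw [this, aux_sq M, hdet]
    rw [Matrix.mul_sub, Matrix.mul_smul, Matrix.mul_smul]
    simp [pow_succ, Matrix.mul_one]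
    rfl
  have key : ∀ i : ℕ, Matrix.trace (M ^ i) = l ^ i + (l⁻¹) ^ i ∧
      Matrix.trace (M ^ (i+1)) = l ^ (i+1) + (l⁻¹) ^ (i+1) := by
    intro i
    induction i with
    | zero =>
      constructor
      · simp [Matrix.trace_one]; norm_num
      · simpa using hsum.symm
    | succ n ih =>
      refine ⟨ih.2, ?_⟩
      rw [hrec n]
      rw [Matrix.trace_sub, Matrix.trace_smul, ih.1, ih.2]
      rw [← hsum, smul_eq_mul]
      field_simp
      have hinv : l * l⁻¹ = 1 := mul_inv_cancel₀ hl0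
      linear_combination (l * l⁻¹ ^ n - l⁻¹ * l⁻¹ ^ n) * hinv
  exact fun i => (key i).1

private lemma aux_sum (k : ℕ) (l : ℂ) :
    ∑ i ∈ Icc 1 k, (-1:ℂ)^(k-i) * (l^(k+i) + l^(k-i)) + (-1:ℂ)^k * l^k
      = ∑ j ∈ range (2*k+1), (-l)^j := by
  have hIcc : ∑ i ∈ Icc 1 k, (-1:ℂ)^(k-i) * (l^(k+i) + l^(k-i))
      = ∑ i ∈ range k, (-1:ℂ)^(k-(1+i)) * (l^(k+(1+i)) + l^(k-(1+i))) := by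
    apply Finset.sum_nbij' (fun a => a - 1) (fun b => 1 + b)
    · intro a ha; simp at ha ⊢; omega
    · intro a ha; simp at ha ⊢; omega
    · intro a ha; simp at ha; omega
    · intro a _; omega
    · intro a ha; simp at ha; rw [show 1 + (a-1) = a from by omega]
  have hsplit : ∑ j ∈ range (2*k+1), (-l)^j
      = (∑ j ∈ range (k+1), (-l)^j) + ∑ i ∈ range k, (-l)^(k+1+i) := by
    rw [show 2*k+1 = (k+1)+k by ring, Finset.sum_range_add]
  have h1 : ∑ i ∈ range k, (-1:ℂ)^(k-(1+i)) * l^(k+(1+i)) = ∑ i ∈ range k, (-l)^(k+1+i) := by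
    apply Finset.sum_congr rfl
    intro i hi
    rw [Finset.mem_range] at hi
    have hs : ((-1:ℂ))^(k+1+i) = (-1)^(k-(1+i)) := by
      rw [show k+1+i = (k-(1+i)) + 2*(i+1) from by omega, pow_add, pow_mul, neg_one_sq,
        one_pow, mul_one]
    rw [neg_pow l, hs, show k+(1+i) = k+1+i from by omega]
  have h2 : ∑ i ∈ range k, (-1:ℂ)^(k-(1+i)) * l^(k-(1+i)) = ∑ j ∈ range k, (-l)^j := by
    rw [← Finset.sum_range_reflect (fun j => (-l)^j) k]
    apply Finset.sum_congr rfl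
    intro i hi
    rw [Finset.mem_range] at hi
    rw [show k-(1+i) = k-1-i from by omega, neg_pow l]
  have h3 : ∑ j ∈ range (k+1), (-l)^j = (∑ j ∈ range k, (-l)^j) + (-1:ℂ)^k * l^k := by
    rw [Finset.sum_range_succ, neg_pow l]
  rw [hIcc]
  simp only [mul_add]
  rw [Finset.sum_add_distrib, h1, h2, hsplit, h3]
  ring

private lemma aux_rhs (k : ℕ) {ζ : ℂ} (hζ : IsPrimitiveRoot ζ (2*k+1)) (l t : ℂ)
    (hl : l*l - t*l + 1 = 0) :
    (∏ j ∈ Icc 1 k, (t + ζ^j + (ζ^j)⁻¹)) * l^k = ∏ j ∈ Icc 1 (2*k), (l + ζ^j) := by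
  have hζ0 : ζ ≠ 0 := by
    intro h
    have := hζ.pow_eq_one
    rw [h, zero_pow (Nat.succ_ne_zero _)] at this
    exact zero_ne_one this
  have hcard : (Icc 1 k).card = k := by rw [Nat.card_Icc]; omega
  have hlk : l^k = ∏ _j ∈ Icc 1 k, l := by rw [Finset.prod_const, hcard]
  rw [hlk, ← Finset.prod_mul_distrib]
  have hfac : ∀ j ∈ Icc 1 k, (t + ζ^j + (ζ^j)⁻¹) * l = (l + ζ^j) * (l + ζ^(2*k+1-j)) := by
    intro j hj
    rw [Finset.mem_Icc] at hj
    have hzj : ζ^j ≠ 0 := pow_ne_zero _ hζ0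
    have hinv : ζ^(2*k+1-j) = (ζ^j)⁻¹ := by
      apply eq_inv_of_mul_eq_one_left
      rw [← pow_add, show 2*k+1-j+j = 2*k+1 from by omega, hζ.pow_eq_one]
    rw [hinv]
    have hc : ζ^j * (ζ^j)⁻¹ = 1 := mul_inv_cancel₀ hzj
    linear_combination -hl - hc
  rw [Finset.prod_congr rfl hfac, Finset.prod_mul_distrib]
  have hre : ∏ j ∈ Icc 1 k, (l + ζ^(2*k+1-j)) = ∏ j ∈ Icc (k+1) (2*k), (l + ζ^j) := by
    apply Finset.prod_nbij' (fun a => 2*k+1-a) (fun b => 2*k+1-b)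
    · intro a ha; simp at ha ⊢; omega
    · intro a ha; simp at ha ⊢; omega
    · intro a ha; simp at ha; omega
    · intro a ha; simp at ha; omega
    · intro a ha; rfl
  rw [hre, ← Finset.prod_union]
  · congr 1
    ext x
    simp only [Finset.mem_union, Finset.mem_Icc]
    omega
  · rw [Finset.disjoint_left]
    intro a ha hb
    simp only [Finset.mem_Icc] at ha hb
    omega

/-- Cyclotomic factorization (Jambor–Liebeck–O'Brien, Lemma 2.1): for `A ∈ SL₂(ℂ)`,
`k ≥ 1` and `ζ = e^{2πi/(2k+1)}`,
`∑_{i=1}^{k} (-1)^{k-i} tr(A^i) + (-1)^k = ∏_{j=1}^{k} (tr(A) + ζ^j + ζ^{-j})`. -/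
theorem sum_trace_pow_eq_prod_trace_add_root_of_unity
    (k : ℕ) (hk : 1 ≤ k) (A : Matrix.SpecialLinearGroup (Fin 2) ℂ) :
    (∑ i ∈ Finset.Icc 1 k, (-1 : ℂ) ^ (k - i) *
        Matrix.trace ((A ^ i : Matrix.SpecialLinearGroup (Fin 2) ℂ) : Matrix (Fin 2) (Fin 2) ℂ)
      + (-1 : ℂ) ^ k)
    = ∏ j ∈ Finset.Icc 1 k,
        (Matrix.trace ((A : Matrix (Fin 2) (Fin 2) ℂ))
          + Complex.exp (2 * Real.pi * Complex.I / (2 * k + 1)) ^ (j : ℤ)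
          + Complex.exp (2 * Real.pi * Complex.I / (2 * k + 1)) ^ (-(j : ℤ))) := by
  set ζ : ℂ := Complex.exp (2 * Real.pi * Complex.I / (2 * k + 1)) with hζdef
  have hζ : IsPrimitiveRoot ζ (2*k+1) := by
    have := Complex.isPrimitiveRoot_exp (2*k+1) (by omega)
    convert this using 2
    push_cast
    ring
  set M : Matrix (Fin 2) (Fin 2) ℂ := (A : Matrix (Fin 2) (Fin 2) ℂ) with hM
  set t : ℂ := Matrix.trace M with ht
  have hdet : M.det = 1 := A.2
  -- find an eigenvalue l
  obtain ⟨s, hs⟩ : ∃ s : ℂ, s^2 = t^2 - 4 := by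
    refine ⟨(t^2-4) ^ ((2:ℂ)⁻¹), ?_⟩
    have := Complex.cpow_nat_inv_pow (t^2-4) (two_ne_zero)
    simpa using this
  set l : ℂ := (t + s)/2 with hldef
  have hl : l * l - t * l + 1 = 0 := by
    rw [hldef]
    linear_combination hs/4
  have hl0 : l ≠ 0 := by
    intro h
    rw [h] at hl
    simp at hl
  have htr := aux_trace_pow M hdet l hl hl0
  -- rewrite goal traces
  have hcoe : ∀ i : ℕ, ((A ^ i : Matrix.SpecialLinearGroup (Fin 2) ℂ) :
      Matrix (Fin 2) (Fin 2) ℂ) = M ^ i := fun i => by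
    rw [hM]; exact Matrix.SpecialLinearGroup.coe_pow A i
  have hζj : ∀ j : ℕ, ζ ^ (-(j:ℤ)) = (ζ^j)⁻¹ := fun j => by
    rw [zpow_neg, zpow_natCast]
  simp only [hcoe, htr]
  have hmain : (∑ i ∈ Finset.Icc 1 k, (-1:ℂ) ^ (k - i) * (l ^ i + (l⁻¹) ^ i) + (-1:ℂ) ^ k) * l^k
      = (∏ j ∈ Finset.Icc 1 k, (t + ζ^j + (ζ^j)⁻¹)) * l^k := by
    rw [aux_rhs k hζ l t hl, aux_prod_Icc k hζ l]
    rw [add_mul, Finset.sum_mul]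
    have hterm : ∀ i ∈ Finset.Icc 1 k,
        (-1:ℂ) ^ (k - i) * (l ^ i + (l⁻¹) ^ i) * l^k
          = (-1:ℂ)^(k-i) * (l^(k+i) + l^(k-i)) := by
      intro i hi
      rw [Finset.mem_Icc] at hi
      have h1 : l ^ i * l ^ k = l^(k+i) := by rw [← pow_add]; ring_nf
      have h2 : (l⁻¹) ^ i * l ^ k = l^(k-i) := by
        rw [show k = (k-i) + i from by omega, pow_add, ← mul_assoc, inv_pow,
          mul_comm ((l^i)⁻¹) (l^(k-i)), mul_assoc, inv_mul_cancel₀ (pow_ne_zero i hl0), mul_one]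
        rw [show k - i + i - i = k - i from by omega]
      calc (-1:ℂ) ^ (k - i) * (l ^ i + (l⁻¹) ^ i) * l^k
          = (-1:ℂ) ^ (k - i) * (l ^ i * l^k + (l⁻¹) ^ i * l^k) := by ring
        _ = (-1:ℂ)^(k-i) * (l^(k+i) + l^(k-i)) := by rw [h1, h2]
    rw [Finset.sum_congr rfl hterm]
    exact aux_sum k l
  have := mul_right_cancel₀ (pow_ne_zero k hl0) hmain
  rw [this]
  apply Finset.prod_congr rfl
  intro j hj
  rw [hζj j, zpow_natCast]
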